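/- arXiv:2102.10907 — 2 statements merged into one kernel-verified Lean document; each statement's English description precedes it below -/
import Mathlib

section
/- Equivalence of material and Eulerian barotropic momentum equations: in the continuum setup, assume in addition that for every t the map φ(t,·) is a C² diffeomorphism of ℝⁿ, that ρ₀ : ℝⁿ → ℝ and ρ : ℝ × ℝⁿ → ℝ satisfy ρ₀(X) = ρ(t, φ(t,X)) · det F(t,X) for all (t,X), that p : ℝ × ℝⁿ → ℝ is continuously differentiable in x, and that Π : ℝⁿ → ℝ is continuously differentiable. Then the material momentum equation — for all (t,X) and each a ∈ {1,…,n}: ρ₀(X) ∂²φᵃ/∂t²(t,X) + Σ_{i=1}^{n} ∂/∂Xⁱ [ p(t, φ(t,X)) (adj F(t,X))_{i a} ] = −ρ₀(X) (∂Π/∂xᵃ)(φ(t,X)) — holds if and only if the Eulerian momentum equation ρ(∂u/∂t + (u·∇_x)u) = −∇_x p − ρ ∇_x Π holds at every (t,x) ∈ ℝ × ℝⁿ. -/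
open Matrix

noncomputable def detCM (n : ℕ) :
    ContinuousMultilinearMap ℝ (fun _ : Fin n => (Fin n → ℝ)) ℝ :=
  MultilinearMap.mkContinuous
    ((Matrix.detRowAlternating : (Fin n → ℝ) [⋀^Fin n]→ₗ[ℝ] ℝ)).toMultilinearMap
    (Nat.factorial n) (by
      intro m
      show ‖(Matrix.of m).det‖ ≤ _
      rw [Matrix.det_apply]
      refine le_trans (norm_sum_le _ _) ?_
      have key : ∀ σ : Equiv.Perm (Fin n),
          ‖Equiv.Perm.sign σ • ∏ i, Matrix.of m (σ i) i‖ ≤ ∏ i, ‖m i‖ := by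
        intro σ
        have h1 : ‖Equiv.Perm.sign σ • ∏ i, Matrix.of m (σ i) i‖ = ‖∏ i, m (σ i) i‖ := by
          rcases Int.units_eq_one_or (Equiv.Perm.sign σ) with h | h <;>
            simp [h, Matrix.of_apply]
        rw [h1]
        calc ‖∏ i, m (σ i) i‖ = ∏ i, ‖m (σ i) i‖ := norm_prod _ _
          _ ≤ ∏ i, ‖m (σ i)‖ :=
            Finset.prod_le_prod (fun i _ => norm_nonneg _)
              (fun i _ => norm_le_pi_norm (m (σ i)) i)
          _ = ∏ i, ‖m i‖ := Equiv.prod_comp σ (fun i => ‖m i‖)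
      refine le_trans (Finset.sum_le_sum fun σ _ => key σ) ?_
      rw [Finset.sum_const, Finset.card_univ, Fintype.card_perm, Fintype.card_fin,
        nsmul_eq_mul])

lemma detCM_apply {n : ℕ} (m : Fin n → (Fin n → ℝ)) : detCM n m = (Matrix.of m).det := rfl

lemma det_update_antisymm {n : ℕ} (M : Matrix (Fin n) (Fin n) ℝ) {a c : Fin n} (hac : c ≠ a)
    (r s : Fin n → ℝ) :
    ((M.updateRow a r).updateRow c s).det = -((M.updateRow a s).updateRow c r).det := by
  have h : (M.updateRow a s).updateRow c r
      = ((M.updateRow a r).updateRow c s).submatrix (Equiv.swap a c) id := by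
    ext k l
    rcases eq_or_ne k a with rfl | hka
    · rw [Matrix.submatrix_apply, Equiv.swap_apply_left, id_eq,
        Matrix.updateRow_ne hac.symm, Matrix.updateRow_self, Matrix.updateRow_self]
    rcases eq_or_ne k c with rfl | hkc
    · rw [Matrix.submatrix_apply, Equiv.swap_apply_right, id_eq,
        Matrix.updateRow_self, Matrix.updateRow_ne hac.symm, Matrix.updateRow_self]
    · rw [Matrix.submatrix_apply, Equiv.swap_apply_of_ne_of_ne hka hkc, id_eq,
        Matrix.updateRow_ne hkc, Matrix.updateRow_ne hka,
        Matrix.updateRow_ne hkc, Matrix.updateRow_ne hka]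
  rw [h, Matrix.det_permute, Equiv.Perm.sign_swap (Ne.symm hac)]
  push_cast
  ring

lemma sum_symm_antisymm {n : ℕ} (S D : Fin n → Fin n → ℝ)
    (hS : ∀ i j, S i j = S j i) (hD : ∀ i j, D i j = -D j i) :
    ∑ i, ∑ j, S i j * D i j = 0 := by
  have h : ∑ i, ∑ j, S i j * D i j = ∑ i, ∑ j, -(S i j * D i j) := by
    rw [Finset.sum_comm]
    exact Finset.sum_congr rfl fun i _ => Finset.sum_congr rfl fun j _ => by
      rw [hS j i, hD j i]; ring
  simp only [Finset.sum_neg_distrib] at h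
  linarith

lemma piola {n : ℕ} (ψ : (Fin n → ℝ) → (Fin n → ℝ)) (hψ : ContDiff ℝ 2 ψ)
    (a : Fin n) (X : Fin n → ℝ) :
    ∑ i, fderiv ℝ
        (fun Y => (Matrix.of (fun c j => fderiv ℝ ψ Y (Pi.single j 1) c)).adjugate i a)
        X (Pi.single i 1) = 0 := by
  classical
  have hψ1 : Differentiable ℝ ψ := hψ.differentiable two_ne_zero
  have hDψ : ContDiff ℝ 1 (fderiv ℝ ψ) := hψ.fderiv_right (by norm_num)
  set W := fderiv ℝ (fderiv ℝ ψ) X with hWdef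
  have hW : HasFDerivAt (fderiv ℝ ψ) W X := (hDψ.differentiable one_ne_zero X).hasFDerivAt
  have Wsymm : ∀ v w, W v w = W w v :=
    second_derivative_symmetric (fun y => (hψ1 y).hasFDerivAt) hW
  set A : (Fin n → ℝ) → (Fin n → Fin n → ℝ) :=
    fun Y c j => fderiv ℝ ψ Y (Pi.single j 1) c with hAdef
  set Φ : Fin n → (((Fin n → ℝ) →L[ℝ] (Fin n → ℝ)) →L[ℝ] (Fin n → ℝ)) := fun c =>
    ContinuousLinearMap.pi (fun j =>
      (ContinuousLinearMap.proj c).comp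
        (ContinuousLinearMap.apply ℝ (Fin n → ℝ) (Pi.single j 1))) with hΦdef
  have hrow : ∀ c, HasFDerivAt (fun Y => A Y c) ((Φ c).comp W) X := fun c =>
    ((Φ c).hasFDerivAt).comp X hW
  have key : ∀ i : Fin n,
      HasFDerivAt (fun Y => detCM n (fun c => Function.update (A Y) a (Pi.single i 1) c))
        (∑ c, ((detCM n).toContinuousLinearMap
            (fun c' => Function.update (A X) a (Pi.single i 1) c') c) ∘L
          (if c = a then (0 : (Fin n → ℝ) →L[ℝ] (Fin n → ℝ)) else (Φ c).comp W)) X := by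
    intro i
    refine HasFDerivAt.multilinear_comp (detCM n) (fun c => ?_)
    rcases eq_or_ne c a with rfl | hc
    · rw [if_pos rfl]
      simp only [Function.update_self]
      exact hasFDerivAt_const _ _
    · rw [if_neg hc]
      simp only [Function.update_of_ne hc]
      exact hrow c
  have hfun : ∀ i : Fin n,
      (fun Y => (Matrix.of (fun c j => fderiv ℝ ψ Y (Pi.single j 1) c)).adjugate i a)
      = fun Y => detCM n (fun c => Function.update (A Y) a (Pi.single i 1) c) := by
    intro i; funext Y
    rw [Matrix.adjugate_apply, detCM_apply]
    rfl
  have hfder : ∀ i : Fin n,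
      fderiv ℝ (fun Y => detCM n (fun c => Function.update (A Y) a (Pi.single i 1) c))
        X (Pi.single i 1)
      = ∑ c, ((detCM n).toContinuousLinearMap
            (fun c' => Function.update (A X) a (Pi.single i 1) c') c)
          ((if c = a then (0 : (Fin n → ℝ) →L[ℝ] (Fin n → ℝ)) else (Φ c).comp W)
            (Pi.single i 1)) := by
    intro i
    rw [(key i).fderiv, ContinuousLinearMap.sum_apply]
    exact Finset.sum_congr rfl fun c _ => rfl
  calc ∑ i, fderiv ℝ
        (fun Y => (Matrix.of (fun c j => fderiv ℝ ψ Y (Pi.single j 1) c)).adjugate i a)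
        X (Pi.single i 1)
      = ∑ c, ∑ i, ((detCM n).toContinuousLinearMap
            (fun c' => Function.update (A X) a (Pi.single i 1) c') c)
          ((if c = a then (0 : (Fin n → ℝ) →L[ℝ] (Fin n → ℝ)) else (Φ c).comp W)
            (Pi.single i 1)) := by
        rw [← Finset.sum_comm]
        exact Finset.sum_congr rfl fun i _ => by rw [hfun i, hfder i]
    _ = 0 := by
        refine Finset.sum_eq_zero (fun c _ => ?_)
        rcases eq_or_ne c a with rfl | hc
        · refine Finset.sum_eq_zero fun i _ => ?_
          rw [if_pos rfl, ContinuousLinearMap.zero_apply, map_zero]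
        · simp only [if_neg hc]
          have expand : ∀ i : Fin n,
              ((detCM n).toContinuousLinearMap
                (fun c' => Function.update (A X) a (Pi.single i 1) c') c)
                (((Φ c).comp W) (Pi.single i 1))
              = ∑ j, (W (Pi.single i 1) (Pi.single j 1) c) *
                  detCM n (Function.update (Function.update (A X) a (Pi.single i 1)) c
                    (Pi.single j 1)) := by
            intro i
            have hv : ((Φ c).comp W) (Pi.single i 1)
                = ∑ j, (W (Pi.single i 1) (Pi.single j 1) c) •
                    (Pi.single j 1 : Fin n → ℝ) := by
              funext j'
              rw [Finset.sum_apply]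
              simp [hΦdef, Pi.single_apply, ContinuousLinearMap.apply_apply, mul_ite,
                Finset.sum_ite_eq']
            rw [hv, map_sum]
            refine Finset.sum_congr rfl fun j _ => ?_
            rw [ContinuousLinearMap.map_smul]
            simp only [ContinuousMultilinearMap.toContinuousLinearMap_apply, smul_eq_mul]
          rw [Finset.sum_congr rfl fun i _ => expand i]
          refine sum_symm_antisymm _ _ (fun i j => by rw [Wsymm]) (fun i j => ?_)
          rw [detCM_apply, detCM_apply]
          exact det_update_antisymm (Matrix.of (A X)) hc _ _

lemma clm_expand {n : ℕ} {F' : Type*} [NormedAddCommGroup F'] [NormedSpace ℝ F']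
    (L : (Fin n → ℝ) →L[ℝ] F') (v : Fin n → ℝ) :
    L v = ∑ k, v k • L (Pi.single k 1) := by
  conv_lhs => rw [← Finset.univ_sum_single v]
  rw [map_sum]
  refine Finset.sum_congr rfl fun k _ => ?_
  have h : (Pi.single k (v k) : Fin n → ℝ) = v k • (Pi.single k 1 : Fin n → ℝ) := by
    ext j
    by_cases hj : j = k <;> simp [Pi.single_apply, hj]
  rw [h, _root_.map_smul]

lemma adj_diff {n : ℕ} (ψ : (Fin n → ℝ) → (Fin n → ℝ)) (hψ : ContDiff ℝ 2 ψ)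
    (i a : Fin n) (X : Fin n → ℝ) :
    DifferentiableAt ℝ
      (fun Y => (Matrix.of (fun c j => fderiv ℝ ψ Y (Pi.single j 1) c)).adjugate i a) X := by
  classical
  have hDψ : ContDiff ℝ 1 (fderiv ℝ ψ) := hψ.fderiv_right (by norm_num)
  set W := fderiv ℝ (fderiv ℝ ψ) X with hWdef
  have hW : HasFDerivAt (fderiv ℝ ψ) W X := (hDψ.differentiable one_ne_zero X).hasFDerivAt
  set A : (Fin n → ℝ) → (Fin n → Fin n → ℝ) :=
    fun Y c j => fderiv ℝ ψ Y (Pi.single j 1) c with hAdef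
  set Φ : Fin n → (((Fin n → ℝ) →L[ℝ] (Fin n → ℝ)) →L[ℝ] (Fin n → ℝ)) := fun c =>
    ContinuousLinearMap.pi (fun j =>
      (ContinuousLinearMap.proj c).comp
        (ContinuousLinearMap.apply ℝ (Fin n → ℝ) (Pi.single j 1))) with hΦdef
  have hrow : ∀ c, HasFDerivAt (fun Y => A Y c) ((Φ c).comp W) X := fun c =>
    ((Φ c).hasFDerivAt).comp X hW
  have key : HasFDerivAt (fun Y => detCM n (fun c => Function.update (A Y) a (Pi.single i 1) c))
        (∑ c, ((detCM n).toContinuousLinearMap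
            (fun c' => Function.update (A X) a (Pi.single i 1) c') c) ∘L
          (if c = a then (0 : (Fin n → ℝ) →L[ℝ] (Fin n → ℝ)) else (Φ c).comp W)) X := by
    refine HasFDerivAt.multilinear_comp (detCM n) (fun c => ?_)
    rcases eq_or_ne c a with rfl | hc
    · rw [if_pos rfl]
      simp only [Function.update_self]
      exact hasFDerivAt_const _ _
    · rw [if_neg hc]
      simp only [Function.update_of_ne hc]
      exact hrow c
  have hfun : (fun Y => (Matrix.of (fun c j => fderiv ℝ ψ Y (Pi.single j 1) c)).adjugate i a)
      = fun Y => detCM n (fun c => Function.update (A Y) a (Pi.single i 1) c) := by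
    funext Y
    rw [Matrix.adjugate_apply, detCM_apply]
    rfl
  rw [hfun]
  exact key.differentiableAt

lemma pressure_div {n : ℕ} (ψ : (Fin n → ℝ) → (Fin n → ℝ)) (hψ : ContDiff ℝ 2 ψ)
    (pt : (Fin n → ℝ) → ℝ) (hpt : ContDiff ℝ 1 pt) (a : Fin n) (X : Fin n → ℝ) :
    ∑ i, fderiv ℝ (fun Y => pt (ψ Y) *
          (Matrix.of (fun c j => fderiv ℝ ψ Y (Pi.single j 1) c)).adjugate i a)
        X (Pi.single i 1)
      = fderiv ℝ pt (ψ X) (Pi.single a 1) *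
          (Matrix.of (fun c j => fderiv ℝ ψ X (Pi.single j 1) c)).det := by
  classical
  have hψ1 : Differentiable ℝ ψ := hψ.differentiable two_ne_zero
  have hqd : HasFDerivAt (fun Y => pt (ψ Y))
      ((fderiv ℝ pt (ψ X)).comp (fderiv ℝ ψ X)) X :=
    ((hpt.differentiable one_ne_zero (ψ X)).hasFDerivAt).comp X (hψ1 X).hasFDerivAt
  set M := Matrix.of (fun c j => fderiv ℝ ψ X (Pi.single j 1) c) with hM
  have hmul : ∀ i, fderiv ℝ (fun Y => pt (ψ Y) *
        (Matrix.of (fun c j => fderiv ℝ ψ Y (Pi.single j 1) c)).adjugate i a) X (Pi.single i 1)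
      = pt (ψ X) * fderiv ℝ
            (fun Y => (Matrix.of (fun c j => fderiv ℝ ψ Y (Pi.single j 1) c)).adjugate i a)
            X (Pi.single i 1)
        + M.adjugate i a * fderiv ℝ (fun Y => pt (ψ Y)) X (Pi.single i 1) := by
    intro i
    rw [fderiv_fun_mul hqd.differentiableAt (adj_diff ψ hψ i a X)]
    simp [hM]
  rw [Finset.sum_congr rfl (fun i _ => hmul i), Finset.sum_add_distrib, ← Finset.mul_sum,
    piola ψ hψ a X, mul_zero, zero_add]
  have hq' : ∀ i : Fin n, fderiv ℝ (fun Y => pt (ψ Y)) X (Pi.single i 1)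
      = ∑ b, M b i * fderiv ℝ pt (ψ X) (Pi.single b 1) := by
    intro i
    rw [hqd.fderiv, ContinuousLinearMap.comp_apply,
      clm_expand (fderiv ℝ pt (ψ X)) (fderiv ℝ ψ X (Pi.single i 1))]
    exact Finset.sum_congr rfl fun b _ => by rw [smul_eq_mul]; rfl
  rw [Finset.sum_congr rfl (fun i _ => by rw [hq' i, Finset.mul_sum])]
  rw [Finset.sum_comm]
  have : ∀ b, ∑ i, M.adjugate i a * (M b i * fderiv ℝ pt (ψ X) (Pi.single b 1))
      = (M * M.adjugate) b a * fderiv ℝ pt (ψ X) (Pi.single b 1) := by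
    intro b
    rw [Matrix.mul_apply, Finset.sum_mul]
    exact Finset.sum_congr rfl fun i _ => by ring
  rw [Finset.sum_congr rfl (fun b _ => this b), Matrix.mul_adjugate]
  simp [Matrix.one_apply, Finset.sum_ite_eq', mul_comm]

lemma det_ne_zero_of_inv {n : ℕ} (ψ einv : (Fin n → ℝ) → (Fin n → ℝ))
    (hψ : Differentiable ℝ ψ) (heinv : Differentiable ℝ einv)
    (h : ∀ Y, einv (ψ Y) = Y) (X : Fin n → ℝ) :
    (Matrix.of (fun c j => fderiv ℝ ψ X (Pi.single j 1) c)).det ≠ 0 := by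
  have hcomp : HasFDerivAt (fun Y => einv (ψ Y))
      ((fderiv ℝ einv (ψ X)).comp (fderiv ℝ ψ X)) X :=
    ((heinv (ψ X)).hasFDerivAt).comp X (hψ X).hasFDerivAt
  have hid : HasFDerivAt (fun Y => einv (ψ Y)) (ContinuousLinearMap.id ℝ _) X := by
    have he : (fun Y : Fin n → ℝ => einv (ψ Y)) = fun Y => Y := funext h
    rw [he]
    exact hasFDerivAt_id X
  have huniq : (fderiv ℝ einv (ψ X)).comp (fderiv ℝ ψ X) = ContinuousLinearMap.id ℝ _ :=
    hcomp.unique hid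
  set M := Matrix.of (fun c j => fderiv ℝ ψ X (Pi.single j 1) c) with hM
  set G := Matrix.of (fun c j => fderiv ℝ einv (ψ X) (Pi.single j 1) c) with hG
  have hGM : G * M = 1 := by
    ext b j
    rw [Matrix.mul_apply]
    have h1 : fderiv ℝ einv (ψ X) (fderiv ℝ ψ X (Pi.single j 1))
        = ∑ k, fderiv ℝ ψ X (Pi.single j 1) k • fderiv ℝ einv (ψ X) (Pi.single k 1) :=
      clm_expand _ _
    have h2 : fderiv ℝ einv (ψ X) (fderiv ℝ ψ X (Pi.single j 1)) = Pi.single j 1 := by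
      rw [← ContinuousLinearMap.comp_apply, huniq]
      rfl
    calc ∑ k, G b k * M k j
        = ∑ k, fderiv ℝ ψ X (Pi.single j 1) k * fderiv ℝ einv (ψ X) (Pi.single k 1) b :=
          Finset.sum_congr rfl fun k _ => by
            rw [hG, hM]
            simp only [Matrix.of_apply]
            ring
      _ = (∑ k, fderiv ℝ ψ X (Pi.single j 1) k • fderiv ℝ einv (ψ X) (Pi.single k 1)) b := by
          rw [Finset.sum_apply]
          exact Finset.sum_congr rfl fun k _ => by
            rw [Pi.smul_apply, smul_eq_mul]
      _ = (Pi.single j 1 : Fin n → ℝ) b := by rw [← h1, h2]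
      _ = (1 : Matrix (Fin n) (Fin n) ℝ) b j := by rw [Matrix.one_apply, Pi.single_apply]
  intro h0
  have hdet := congrArg Matrix.det hGM
  rw [Matrix.det_mul, h0, mul_zero, Matrix.det_one] at hdet
  exact zero_ne_one hdet

lemma accel_eq {n : ℕ} (φ : ℝ × (Fin n → ℝ) → (Fin n → ℝ)) (hφ : ContDiff ℝ 2 φ)
    (u : ℝ × (Fin n → ℝ) → (Fin n → ℝ)) (hu : ContDiff ℝ 1 u)
    (hflow : ∀ t X, fderiv ℝ φ (t, X) (1, 0) = u (t, φ (t, X)))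
    (t : ℝ) (X : Fin n → ℝ) (a : Fin n) :
    fderiv ℝ (fun y : ℝ × (Fin n → ℝ) => fderiv ℝ φ y (1, 0) a) (t, X) (1, 0)
      = fderiv ℝ u (t, φ (t, X)) (1, 0) a
        + ∑ b, u (t, φ (t, X)) b * fderiv ℝ u (t, φ (t, X)) (0, Pi.single b 1) a := by
  have hφ1 : Differentiable ℝ φ := hφ.differentiable two_ne_zero
  have hu1 : Differentiable ℝ u := hu.differentiable one_ne_zero
  have hfun : (fun y : ℝ × (Fin n → ℝ) => fderiv ℝ φ y (1, 0) a)
      = fun y : ℝ × (Fin n → ℝ) => u (y.1, φ y) a :=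
    funext fun y => congrFun (hflow y.1 y.2) a
  rw [hfun]
  have hg : HasFDerivAt (fun y : ℝ × (Fin n → ℝ) => ((y.1 : ℝ), φ y))
      ((ContinuousLinearMap.fst ℝ ℝ (Fin n → ℝ)).prod (fderiv ℝ φ (t, X))) (t, X) :=
    HasFDerivAt.prodMk hasFDerivAt_fst (hφ1 (t, X)).hasFDerivAt
  have hcomp : HasFDerivAt (fun y : ℝ × (Fin n → ℝ) => u (y.1, φ y))
      ((fderiv ℝ u (t, φ (t, X))).comp
        ((ContinuousLinearMap.fst ℝ ℝ (Fin n → ℝ)).prod (fderiv ℝ φ (t, X)))) (t, X) :=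
    ((hu1 (t, φ (t, X))).hasFDerivAt).comp (t, X) hg
  have hP : HasFDerivAt (fun y : ℝ × (Fin n → ℝ) => u (y.1, φ y) a)
      ((ContinuousLinearMap.proj a).comp ((fderiv ℝ u (t, φ (t, X))).comp
        ((ContinuousLinearMap.fst ℝ ℝ (Fin n → ℝ)).prod (fderiv ℝ φ (t, X))))) (t, X) :=
    by exact ((ContinuousLinearMap.proj a).hasFDerivAt).comp (t, X) hcomp
  rw [hP.fderiv]
  have h1 : ((ContinuousLinearMap.fst ℝ ℝ (Fin n → ℝ)).prod (fderiv ℝ φ (t, X)))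
      ((1 : ℝ), (0 : Fin n → ℝ)) = ((1 : ℝ), u (t, φ (t, X))) := by
    rw [ContinuousLinearMap.prod_apply, hflow t X]
    rfl
  rw [ContinuousLinearMap.comp_apply, ContinuousLinearMap.comp_apply, h1]
  have h2 : ((1 : ℝ), u (t, φ (t, X)))
      = ((1 : ℝ), (0 : Fin n → ℝ))
        + ∑ b, u (t, φ (t, X)) b • ((0 : ℝ), (Pi.single b 1 : Fin n → ℝ)) := by
    have hfst : (∑ b, u (t, φ (t, X)) b • ((0 : ℝ), (Pi.single b 1 : Fin n → ℝ))).1 = 0 := by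
      rw [Prod.fst_sum]
      simp
    have hsnd : (∑ b, u (t, φ (t, X)) b • ((0 : ℝ), (Pi.single b 1 : Fin n → ℝ))).2
        = u (t, φ (t, X)) := by
      rw [Prod.snd_sum]
      simp only [Prod.smul_snd]
      have hexp := clm_expand (ContinuousLinearMap.id ℝ (Fin n → ℝ)) (u (t, φ (t, X)))
      simp only [ContinuousLinearMap.id_apply] at hexp
      exact hexp.symm
    refine Prod.ext ?_ ?_
    · rw [Prod.fst_add, hfst]
      norm_num
    · rw [Prod.snd_add, hsnd]
      simp
  rw [h2, map_add, map_sum]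
  simp only [ContinuousLinearMap.map_smul, map_add, ContinuousLinearMap.proj_apply,
    Pi.add_apply, Finset.sum_apply, Pi.smul_apply, smul_eq_mul]

lemma fderiv_fixed_time {n : ℕ} (φ : ℝ × (Fin n → ℝ) → (Fin n → ℝ))
    (hφ : Differentiable ℝ φ) (t : ℝ) (Y v : Fin n → ℝ) :
    fderiv ℝ (fun Z => φ (t, Z)) Y v = fderiv ℝ φ (t, Y) (0, v) := by
  have h1 : HasFDerivAt (fun Z : Fin n → ℝ => ((t : ℝ), Z))
      ((0 : (Fin n → ℝ) →L[ℝ] ℝ).prod (ContinuousLinearMap.id ℝ (Fin n → ℝ))) Y :=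
    HasFDerivAt.prodMk (hasFDerivAt_const t Y) (hasFDerivAt_id Y)
  have h2 : HasFDerivAt (fun Z : Fin n → ℝ => φ (t, Z))
      ((fderiv ℝ φ (t, Y)).comp
        ((0 : (Fin n → ℝ) →L[ℝ] ℝ).prod (ContinuousLinearMap.id ℝ (Fin n → ℝ)))) Y :=
    ((hφ (t, Y)).hasFDerivAt).comp Y h1
  rw [h2.fderiv]
  rfl

/-- **Equivalence of material and Eulerian barotropic momentum equations**: in the
continuum setup, with each `φ(t,·)` a C² diffeomorphism, mass relation
`ρ₀(X) = ρ(t, φ(t,X)) · det F(t,X)`, pressure `p` C¹ in `x` and potential `Π` C¹,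
the material momentum equation
`ρ₀ ∂²φᵃ/∂t² + ∑ᵢ ∂/∂Xⁱ [ p∘φ · (adj F)_{i a} ] = -ρ₀ (∂Π/∂xᵃ)∘φ`
holds everywhere iff the Eulerian momentum equation
`ρ (∂u/∂t + (u·∇)u) = -∇p - ρ ∇Π` holds everywhere. -/
theorem material_iff_eulerian_barotropic_momentum
    (n : ℕ) (hn : 1 ≤ n)
    (φ : ℝ × (Fin n → ℝ) → (Fin n → ℝ)) (hφ : ContDiff ℝ 2 φ)
    (u : ℝ × (Fin n → ℝ) → (Fin n → ℝ)) (hu : ContDiff ℝ 1 u)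
    (hflow : ∀ (t : ℝ) (X : Fin n → ℝ), fderiv ℝ φ (t, X) (1, 0) = u (t, φ (t, X)))
    (F : ℝ → (Fin n → ℝ) → Matrix (Fin n) (Fin n) ℝ)
    (hF : ∀ t X a i, F t X a i = fderiv ℝ φ (t, X) (0, Pi.single i 1) a)
    (hdiffeo : ∀ t : ℝ, ∃ e : (Fin n → ℝ) ≃ (Fin n → ℝ),
      (∀ X, e X = φ (t, X)) ∧ ContDiff ℝ 2 (e.symm : (Fin n → ℝ) → (Fin n → ℝ)))
    (ρ₀ : (Fin n → ℝ) → ℝ) (ρ : ℝ × (Fin n → ℝ) → ℝ)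
    (hmass : ∀ (t : ℝ) (X : Fin n → ℝ), ρ₀ X = ρ (t, φ (t, X)) * (F t X).det)
    (p : ℝ × (Fin n → ℝ) → ℝ) (hp : ∀ t : ℝ, ContDiff ℝ 1 (fun x => p (t, x)))
    (Pot : (Fin n → ℝ) → ℝ) (hPot : ContDiff ℝ 1 Pot) :
    (∀ (t : ℝ) (X : Fin n → ℝ) (a : Fin n),
        ρ₀ X * fderiv ℝ (fun y : ℝ × (Fin n → ℝ) => fderiv ℝ φ y (1, 0) a) (t, X) (1, 0)
          + ∑ i : Fin n,
              fderiv ℝ (fun Y => p (t, φ (t, Y)) * (F t Y).adjugate i a) X (Pi.single i 1)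
          = -(ρ₀ X) * fderiv ℝ Pot (φ (t, X)) (Pi.single a 1))
    ↔
    (∀ (t : ℝ) (x : Fin n → ℝ) (a : Fin n),
        ρ (t, x) *
            (fderiv ℝ u (t, x) (1, 0) a
              + ∑ b : Fin n, u (t, x) b * fderiv ℝ u (t, x) (0, Pi.single b 1) a)
          = -(fderiv ℝ (fun y => p (t, y)) x (Pi.single a 1))
            - ρ (t, x) * fderiv ℝ Pot x (Pi.single a 1)) := by
  classical
  have hφ1 : Differentiable ℝ φ := hφ.differentiable two_ne_zero
  have hψC : ∀ t : ℝ, ContDiff ℝ 2 (fun Y : Fin n → ℝ => φ (t, Y)) := fun t =>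
    hφ.comp (contDiff_const.prodMk contDiff_id)
  have hFA : ∀ (t : ℝ) (Y : Fin n → ℝ), F t Y
      = Matrix.of (fun c j => fderiv ℝ (fun Z : Fin n → ℝ => φ (t, Z)) Y (Pi.single j 1) c) := by
    intro t Y
    ext c j
    rw [Matrix.of_apply, fderiv_fixed_time φ hφ1 t Y, hF t Y c j]
  have main : ∀ (t : ℝ) (X : Fin n → ℝ) (a : Fin n),
      (ρ₀ X * fderiv ℝ (fun y : ℝ × (Fin n → ℝ) => fderiv ℝ φ y (1, 0) a) (t, X) (1, 0)
          + ∑ i : Fin n,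
              fderiv ℝ (fun Y => p (t, φ (t, Y)) * (F t Y).adjugate i a) X (Pi.single i 1)
          = -(ρ₀ X) * fderiv ℝ Pot (φ (t, X)) (Pi.single a 1))
      ↔ (ρ (t, φ (t, X)) *
            (fderiv ℝ u (t, φ (t, X)) (1, 0) a
              + ∑ b : Fin n, u (t, φ (t, X)) b *
                  fderiv ℝ u (t, φ (t, X)) (0, Pi.single b 1) a)
          = -(fderiv ℝ (fun y => p (t, y)) (φ (t, X)) (Pi.single a 1))
            - ρ (t, φ (t, X)) * fderiv ℝ Pot (φ (t, X)) (Pi.single a 1)) := by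
    intro t X a
    obtain ⟨e, he1, he2⟩ := hdiffeo t
    have hψ := hψC t
    have hinv : ∀ Y, (e.symm : (Fin n → ℝ) → (Fin n → ℝ)) ((fun Z : Fin n → ℝ => φ (t, Z)) Y) = Y := by
      intro Y
      show e.symm (φ (t, Y)) = Y
      rw [← he1 Y]
      exact e.symm_apply_apply Y
    have hdet : (F t X).det ≠ 0 := by
      rw [hFA t X]
      exact det_ne_zero_of_inv _ _ (hψ.differentiable two_ne_zero)
        (he2.differentiable two_ne_zero) hinv X
    have hacc := accel_eq φ hφ u hu hflow t X a
    have hpress : ∑ i : Fin n,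
        fderiv ℝ (fun Y => p (t, φ (t, Y)) * (F t Y).adjugate i a) X (Pi.single i 1)
        = fderiv ℝ (fun y => p (t, y)) (φ (t, X)) (Pi.single a 1) * (F t X).det := by
      have heq : ∀ i : Fin n, (fun Y => p (t, φ (t, Y)) * (F t Y).adjugate i a)
          = fun Y => (fun x => p (t, x)) ((fun Z : Fin n → ℝ => φ (t, Z)) Y) *
              (Matrix.of (fun c j =>
                fderiv ℝ (fun Z : Fin n → ℝ => φ (t, Z)) Y (Pi.single j 1) c)).adjugate i a := by
        intro i
        funext Y
        rw [hFA t Y]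
      rw [Finset.sum_congr rfl fun i _ => by rw [heq i]]
      rw [pressure_div _ hψ _ (hp t) a X, ← hFA t X]
    rw [hacc, hpress, hmass t X]
    set r := ρ (t, φ (t, X)) with hr
    set d := (F t X).det with hd
    set Ac := fderiv ℝ u (t, φ (t, X)) (1, 0) a
      + ∑ b : Fin n, u (t, φ (t, X)) b * fderiv ℝ u (t, φ (t, X)) (0, Pi.single b 1) a with hAc
    set Pa := fderiv ℝ (fun y => p (t, y)) (φ (t, X)) (Pi.single a 1) with hPa
    set Ga := fderiv ℝ Pot (φ (t, X)) (Pi.single a 1) with hGa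
    constructor
    · intro h
      have h3 : d * (r * Ac + Pa + r * Ga) = d * 0 := by linear_combination h
      have h4 := mul_left_cancel₀ hdet h3
      linarith
    · intro h
      linear_combination d * h
  constructor
  · intro hM t x a
    obtain ⟨e, he1, he2⟩ := hdiffeo t
    have hx : φ (t, e.symm x) = x := by
      rw [← he1]
      exact e.apply_symm_apply x
    have h := (main t (e.symm x) a).mp (hM t (e.symm x) a)
    rwa [hx] at h
  · intro hE t X a
    exact (main t X a).mpr (hE t (φ (t, X)) a)
end

section
/- Discrete Noether theorem for rotations (2D): let 𝕁 : ℝ² → ℝ² be the rotation by π/2, 𝕁(x₁,x₂) := (−x₂, x₁), and assume the cell Lagrangian L is rotation-invariant, i.e. L(Rx₁, …, Rx₈) = L(x₁, …, x₈) for every rotation matrix R ∈ SO(2) and all (x₁,…,x₈) ∈ (ℝ²)⁸. If the discrete field φ satisfies the discrete Euler–Lagrange node equations at every node (j,a,b) with 0 < j < N, then the total discrete angular momentum 𝐉_r^j := Σ_{a=0}^{A−1} Σ_{b=0}^{B−1} Σ_{p ∈ {2,4,6,8}} ⟨ D_pL(j¹φ(□^j_{a,b})), 𝕁 x_p ⟩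 ∈ ℝ, where x_p denotes the p-th entry of j¹φ(□^j_{a,b}), satisfies 𝐉_r^{j+1} = 𝐉_r^j for all 0 ≤ j ≤ N−2. -/
open scoped RealInnerProductSpace

noncomputable section

/-- The plane `ℝ²` as a Euclidean space. -/
abbrev E2 : Type := EuclideanSpace ℝ (Fin 2)

/-- The rotation of `ℝ²` by `π/2`: `𝕁(x₁,x₂) = (-x₂, x₁)`. -/
noncomputable def Jrot (x : E2) : E2 := WithLp.toLp 2 ![-(x 1), x 0]

/-- Partial gradient `D_pL ∈ ℝ²` of a cell Lagrangian `L` in its `p`-th slot. -/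
noncomputable def pgrad {k : ℕ} (L : (Fin k → E2) → ℝ) (x : Fin k → E2) (p : Fin k) : E2 :=
  gradient (fun y => L (Function.update x p y)) (x p)

/-- The node of the cell `□^j_{a,b}` occupied by slot `s` (slots `0,…,7` correspond to
the paper's slots `1,…,8`). -/
def cellNode (j a b : ℕ) (s : Fin 8) : ℕ × ℕ × ℕ :=
  (j + s.val % 2, a + (s.val / 2) % 2, b + s.val / 4)

/-- First jet of the discrete field on the cell `□^j_{a,b}`. -/
def jet (φ : ℕ → ℕ → ℕ → E2) (j a b : ℕ) : Fin 8 → E2 :=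
  fun s => φ (j + s.val % 2) (a + (s.val / 2) % 2) (b + s.val / 4)

/-- Sum of `D_pL(j¹φ(□))` over all pairs `(□, p)` such that the given node is incident
to `□` in slot `p`. -/
noncomputable def delSum (N A B : ℕ) (L : (Fin 8 → E2) → ℝ) (φ : ℕ → ℕ → ℕ → E2)
    (nd : ℕ × ℕ × ℕ) : E2 :=
  ∑ j' ∈ Finset.range N, ∑ a' ∈ Finset.range A, ∑ b' ∈ Finset.range B, ∑ s : Fin 8,
    if cellNode j' a' b' s = nd then pgrad L (jet φ j' a' b') s else 0

/-- Total discrete angular momentum at time level `j`: the sum over all cells of time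
level `j`, over the paper slots `p ∈ {2,4,6,8}` (slots `1,3,5,7` here), of
`⟨D_pL(j¹φ(□^j_{a,b})), 𝕁 x_p⟩`. -/
noncomputable def Jang (A B : ℕ) (L : (Fin 8 → E2) → ℝ) (φ : ℕ → ℕ → ℕ → E2) (j : ℕ) : ℝ :=
  ∑ a ∈ Finset.range A, ∑ b ∈ Finset.range B,
    (⟪pgrad L (jet φ j a b) 1, Jrot (jet φ j a b 1)⟫
      + ⟪pgrad L (jet φ j a b) 3, Jrot (jet φ j a b 3)⟫
      + ⟪pgrad L (jet φ j a b) 5, Jrot (jet φ j a b 5)⟫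
      + ⟪pgrad L (jet φ j a b) 7, Jrot (jet φ j a b 7)⟫)

/-! ### Auxiliary material for the proof -/

open Real in
/-- The rotation matrix by angle `θ`. -/
noncomputable def rotM (θ : ℝ) : Matrix (Fin 2) (Fin 2) ℝ :=
  !![cos θ, -sin θ; sin θ, cos θ]

open Real in
lemma rotM_mem (θ : ℝ) : rotM θ ∈ Matrix.specialOrthogonalGroup (Fin 2) ℝ := by
  rw [Matrix.mem_specialOrthogonalGroup_iff]
  constructor
  · rw [Matrix.mem_orthogonalGroup_iff]
    ext i j
    fin_cases i <;> fin_cases j <;>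
      simp [rotM, Matrix.mul_apply, Fin.sum_univ_two, Matrix.one_apply] <;>
      ring_nf <;> simp [sin_sq_add_cos_sq, cos_sq_add_sin_sq]
  · simp [rotM, Matrix.det_fin_two]
    ring_nf
    rw [add_comm]
    exact sin_sq_add_cos_sq θ

lemma cle_symm_apply (w : Fin 2 → ℝ) (i : Fin 2) :
    (PiLp.continuousLinearEquiv 2 ℝ (fun _ : Fin 2 => ℝ)).symm w i = w i := rfl

open Real in
lemma rot_formula (θ : ℝ) (v : E2) :
    Matrix.toEuclideanLin (rotM θ) v =
      (PiLp.continuousLinearEquiv 2 ℝ (fun _ : Fin 2 => ℝ)).symm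
        ![cos θ * v 0 - sin θ * v 1, sin θ * v 0 + cos θ * v 1] := by
  ext i
  fin_cases i <;>
    simp [Matrix.toEuclideanLin_apply, Matrix.mulVec, dotProduct, Fin.sum_univ_two,
      rotM, cle_symm_apply, Matrix.vecHead, Matrix.vecTail] <;> ring

open Real in
lemma rot_hasDerivAt (v : E2) :
    HasDerivAt (fun θ : ℝ => Matrix.toEuclideanLin (rotM θ) v) (Jrot v) 0 := by
  have hg : HasDerivAt (fun θ : ℝ => (![cos θ * v 0 - sin θ * v 1,
      sin θ * v 0 + cos θ * v 1] : Fin 2 → ℝ)) ![-(v 1), v 0] 0 := by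
    rw [hasDerivAt_pi]
    intro i
    fin_cases i
    · have := ((hasDerivAt_cos 0).mul_const (v 0)).sub ((hasDerivAt_sin 0).mul_const (v 1))
      simpa [Pi.sub_def] using this
    · have := ((hasDerivAt_sin 0).mul_const (v 0)).add ((hasDerivAt_cos 0).mul_const (v 1))
      simpa [Pi.add_def] using this
  have h2 := ((PiLp.continuousLinearEquiv 2 ℝ (fun _ : Fin 2 => ℝ)).symm :
      (Fin 2 → ℝ) →L[ℝ] E2).hasFDerivAt.comp_hasDerivAt 0 hg
  simp only [rot_formula]
  exact h2

lemma inner_pgrad {k : ℕ} (L : (Fin k → E2) → ℝ) (hL : Differentiable ℝ L)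
    (x : Fin k → E2) (p : Fin k) (v : E2) :
    ⟪pgrad L x p, v⟫ = fderiv ℝ L x (Pi.single p v) := by
  have h1 : HasFDerivAt (fun y => L (Function.update x p y))
      ((fderiv ℝ L x).comp (.pi (Pi.single p (.id ℝ E2)))) (x p) := by
    have h0 : HasFDerivAt L (fderiv ℝ L x) (Function.update x p (x p)) := by
      rw [Function.update_eq_self]; exact (hL x).hasFDerivAt
    have := h0.comp (x p) (hasFDerivAt_update x (x p))
    exact this
  rw [pgrad, gradient, h1.fderiv]
  rw [InnerProductSpace.toDual_symm_apply]
  simp only [ContinuousLinearMap.coe_comp', Function.comp_apply, ContinuousLinearMap.pi_apply]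
  congr 1
  funext i
  rcases eq_or_ne i p with h | h <;> simp [h, Pi.single_apply]

open Real in
/-- Infinitesimal rotation invariance. -/
lemma infinitesimal (L : (Fin 8 → E2) → ℝ) (hL : Differentiable ℝ L)
    (hinv : ∀ (R : Matrix.specialOrthogonalGroup (Fin 2) ℝ) (x : Fin 8 → E2),
      L (fun p => Matrix.toEuclideanLin (R : Matrix (Fin 2) (Fin 2) ℝ) (x p)) = L x)
    (x : Fin 8 → E2) :
    ∑ s : Fin 8, ⟪pgrad L x s, Jrot (x s)⟫ = 0 := by
  have hc : HasDerivAt (fun θ : ℝ => fun p => Matrix.toEuclideanLin (rotM θ) (x p))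
      (fun p => Jrot (x p)) 0 := by
    rw [hasDerivAt_pi]; intro p; exact rot_hasDerivAt (x p)
  have hconst : (fun θ : ℝ => L (fun p => Matrix.toEuclideanLin (rotM θ) (x p)))
      = fun _ => L x := by
    funext θ; exact hinv ⟨rotM θ, rotM_mem θ⟩ x
  have hx0 : (fun p => Matrix.toEuclideanLin (rotM 0) (x p)) = x := by
    funext p
    rw [rot_formula]
    ext i
    fin_cases i <;> simp [cle_symm_apply]
  have hcomp : HasDerivAt (fun θ : ℝ => L (fun p => Matrix.toEuclideanLin (rotM θ) (x p)))
      (fderiv ℝ L x (fun p => Jrot (x p))) 0 := by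
    have h := (hL (fun p => Matrix.toEuclideanLin (rotM 0) (x p))).hasFDerivAt.comp_hasDerivAt 0 hc
    rw [hx0] at h
    exact h
  have hzero : fderiv ℝ L x (fun p => Jrot (x p)) = 0 := by
    rw [hconst] at hcomp
    have := hcomp.deriv
    simpa using this.symm
  calc ∑ s : Fin 8, ⟪pgrad L x s, Jrot (x s)⟫
      = ∑ s : Fin 8, fderiv ℝ L x (Pi.single s (Jrot (x s))) := by
        simp [inner_pgrad L hL]
    _ = fderiv ℝ L x (∑ s : Fin 8, Pi.single s (Jrot (x s))) := (map_sum _ _ _).symm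
    _ = 0 := by rw [Finset.univ_sum_single]; exact hzero

/-- Per-cell inner products. -/
noncomputable def Fq (L : (Fin 8 → E2) → ℝ) (φ : ℕ → ℕ → ℕ → E2)
    (j' a' b' : ℕ) (s : Fin 8) : ℝ :=
  ⟪pgrad L (jet φ j' a' b') s, Jrot (jet φ j' a' b' s)⟫

lemma collapse (A B t α β T : ℕ) (hα : α ≤ A) (hβ : β ≤ B) (c : ℝ) :
    (∑ a ∈ Finset.range (A+1), ∑ b ∈ Finset.range (B+1),
      if ((t, α, β) : ℕ×ℕ×ℕ) = (T, a, b) then c else 0) = if t = T then c else 0 := by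
  simp only [Prod.mk.injEq]
  by_cases ht : t = T
  · simp [ht, ite_and, Finset.sum_ite_eq, Nat.lt_succ_iff, hα, hβ]
  · simp [ht]

lemma sum_odd (f : Fin 8 → ℝ) : (∑ s : Fin 8, if s.val % 2 = 1 then f s else 0)
    = f 1 + f 3 + f 5 + f 7 := by
  simp only [Fin.sum_univ_eight]
  norm_num [show ((1:Fin 8):ℕ) = 1 from rfl, show ((2:Fin 8):ℕ) = 2 from rfl,
    show ((3:Fin 8):ℕ) = 3 from rfl, show ((4:Fin 8):ℕ) = 4 from rfl,
    show ((5:Fin 8):ℕ) = 5 from rfl, show ((6:Fin 8):ℕ) = 6 from rfl,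
    show ((7:Fin 8):ℕ) = 7 from rfl]

lemma sum_even (f : Fin 8 → ℝ) : (∑ s : Fin 8, if s.val % 2 = 0 then f s else 0)
    = f 0 + f 2 + f 4 + f 6 := by
  simp only [Fin.sum_univ_eight]
  norm_num [show ((1:Fin 8):ℕ) = 1 from rfl, show ((2:Fin 8):ℕ) = 2 from rfl,
    show ((3:Fin 8):ℕ) = 3 from rfl, show ((4:Fin 8):ℕ) = 4 from rfl,
    show ((5:Fin 8):ℕ) = 5 from rfl, show ((6:Fin 8):ℕ) = 6 from rfl,
    show ((7:Fin 8):ℕ) = 7 from rfl]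

lemma swap6 (s1 s2 s3 s4 s5 : Finset ℕ) (f : ℕ → ℕ → ℕ → ℕ → ℕ → Fin 8 → ℝ) :
    (∑ a ∈ s1, ∑ b ∈ s2, ∑ c ∈ s3, ∑ d ∈ s4, ∑ e ∈ s5, ∑ s : Fin 8, f a b c d e s)
    = ∑ c ∈ s3, ∑ d ∈ s4, ∑ e ∈ s5, ∑ s : Fin 8, ∑ a ∈ s1, ∑ b ∈ s2, f a b c d e s := by
  calc (∑ a ∈ s1, ∑ b ∈ s2, ∑ c ∈ s3, ∑ d ∈ s4, ∑ e ∈ s5, ∑ s : Fin 8, f a b c d e s)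
      = ∑ a ∈ s1, ∑ c ∈ s3, ∑ b ∈ s2, ∑ d ∈ s4, ∑ e ∈ s5, ∑ s : Fin 8, f a b c d e s :=
        Finset.sum_congr rfl fun _ _ => Finset.sum_comm
    _ = ∑ c ∈ s3, ∑ a ∈ s1, ∑ b ∈ s2, ∑ d ∈ s4, ∑ e ∈ s5, ∑ s : Fin 8, f a b c d e s :=
        Finset.sum_comm
    _ = ∑ c ∈ s3, ∑ a ∈ s1, ∑ d ∈ s4, ∑ b ∈ s2, ∑ e ∈ s5, ∑ s : Fin 8, f a b c d e s :=
        Finset.sum_congr rfl fun _ _ => Finset.sum_congr rfl fun _ _ => Finset.sum_comm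
    _ = ∑ c ∈ s3, ∑ d ∈ s4, ∑ a ∈ s1, ∑ b ∈ s2, ∑ e ∈ s5, ∑ s : Fin 8, f a b c d e s :=
        Finset.sum_congr rfl fun _ _ => Finset.sum_comm
    _ = ∑ c ∈ s3, ∑ d ∈ s4, ∑ a ∈ s1, ∑ e ∈ s5, ∑ b ∈ s2, ∑ s : Fin 8, f a b c d e s :=
        Finset.sum_congr rfl fun _ _ => Finset.sum_congr rfl fun _ _ =>
          Finset.sum_congr rfl fun _ _ => Finset.sum_comm
    _ = ∑ c ∈ s3, ∑ d ∈ s4, ∑ e ∈ s5, ∑ a ∈ s1, ∑ b ∈ s2, ∑ s : Fin 8, f a b c d e s :=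
        Finset.sum_congr rfl fun _ _ => Finset.sum_congr rfl fun _ _ => Finset.sum_comm
    _ = ∑ c ∈ s3, ∑ d ∈ s4, ∑ e ∈ s5, ∑ a ∈ s1, ∑ s : Fin 8, ∑ b ∈ s2, f a b c d e s :=
        Finset.sum_congr rfl fun _ _ => Finset.sum_congr rfl fun _ _ =>
          Finset.sum_congr rfl fun _ _ => Finset.sum_congr rfl fun _ _ => Finset.sum_comm
    _ = ∑ c ∈ s3, ∑ d ∈ s4, ∑ e ∈ s5, ∑ s : Fin 8, ∑ a ∈ s1, ∑ b ∈ s2, f a b c d e s :=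
        Finset.sum_congr rfl fun _ _ => Finset.sum_congr rfl fun _ _ =>
          Finset.sum_congr rfl fun _ _ => Finset.sum_comm

/-- **Discrete Noether theorem for rotations (2D)**: if the cell Lagrangian is invariant
under every rotation `R ∈ SO(2)` acting simultaneously on all its slots, and `φ`
satisfies the discrete Euler–Lagrange node equations at every node with `0 < j < N`,
then the total discrete angular momentum is conserved. -/
theorem discrete_noether_rotations_2D
    (N A B : ℕ) (hN : 1 ≤ N) (hA : 1 ≤ A) (hB : 1 ≤ B)
    (L : (Fin 8 → E2) → ℝ) (hL : Differentiable ℝ L)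
    (hinv : ∀ (R : Matrix.specialOrthogonalGroup (Fin 2) ℝ) (x : Fin 8 → E2),
      L (fun p => Matrix.toEuclideanLin (R : Matrix (Fin 2) (Fin 2) ℝ) (x p)) = L x)
    (φ : ℕ → ℕ → ℕ → E2)
    (hDEL : ∀ j a b : ℕ, 0 < j → j < N → a ≤ A → b ≤ B →
      delSum N A B L φ (j, a, b) = 0) :
    ∀ j : ℕ, j + 2 ≤ N → Jang A B L φ (j + 1) = Jang A B L φ j := by
  intro j hj
  classical
  have hcell : ∀ J a b : ℕ, ∑ s : Fin 8, Fq L φ J a b s = 0 := fun J a b =>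
    infinitesimal L hL hinv (jet φ J a b)
  set G : ℕ → ℝ := fun j' => ∑ a' ∈ Finset.range A, ∑ b' ∈ Finset.range B, ∑ s : Fin 8,
      (if j' + s.val % 2 = j + 1 then Fq L φ j' a' b' s else 0) with hG
  -- the boundary sum of the discrete Euler--Lagrange equations
  have hS0 : (∑ a ∈ Finset.range (A+1), ∑ b ∈ Finset.range (B+1),
      (⟪delSum N A B L φ (j+1, a, b), Jrot (φ (j+1) a b)⟫ : ℝ)) = 0 := by
    refine Finset.sum_eq_zero fun a ha => Finset.sum_eq_zero fun b hb => ?_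
    have ha' := Finset.mem_range.mp ha
    have hb' := Finset.mem_range.mp hb
    rw [hDEL (j+1) a b (by omega) (by omega) (by omega) (by omega), inner_zero_left]
  -- expansion of that sum
  have hexp : (∑ a ∈ Finset.range (A+1), ∑ b ∈ Finset.range (B+1),
      (⟪delSum N A B L φ (j+1, a, b), Jrot (φ (j+1) a b)⟫ : ℝ))
      = ∑ j' ∈ Finset.range N, G j' := by
    have step1 : ∀ a b : ℕ, (⟪delSum N A B L φ (j+1, a, b), Jrot (φ (j+1) a b)⟫ : ℝ)
        = ∑ j' ∈ Finset.range N, ∑ a' ∈ Finset.range A, ∑ b' ∈ Finset.range B, ∑ s : Fin 8,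
            (if cellNode j' a' b' s = ((j+1 : ℕ), a, b) then Fq L φ j' a' b' s else 0) := by
      intro a b
      rw [delSum, sum_inner]
      refine Finset.sum_congr rfl fun j' _ => ?_
      rw [sum_inner]
      refine Finset.sum_congr rfl fun a' _ => ?_
      rw [sum_inner]
      refine Finset.sum_congr rfl fun b' _ => ?_
      rw [sum_inner]
      refine Finset.sum_congr rfl fun s _ => ?_
      split_ifs with h
      · obtain ⟨h1, h2, h3⟩ : j' + s.val % 2 = j+1 ∧ a' + (s.val / 2) % 2 = a
            ∧ b' + s.val / 4 = b := by
          simpa [cellNode, Prod.ext_iff] using h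
        rw [Fq, show jet φ j' a' b' s = φ (j+1) a b from by rw [jet]; rw [h1, h2, h3]]
      · rw [inner_zero_left]
    calc (∑ a ∈ Finset.range (A+1), ∑ b ∈ Finset.range (B+1),
        (⟪delSum N A B L φ (j+1, a, b), Jrot (φ (j+1) a b)⟫ : ℝ))
        = ∑ a ∈ Finset.range (A+1), ∑ b ∈ Finset.range (B+1), ∑ j' ∈ Finset.range N,
            ∑ a' ∈ Finset.range A, ∑ b' ∈ Finset.range B, ∑ s : Fin 8,
            (if cellNode j' a' b' s = ((j+1 : ℕ), a, b) then Fq L φ j' a' b' s else 0) :=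
          Finset.sum_congr rfl fun a _ => Finset.sum_congr rfl fun b _ => step1 a b
      _ = ∑ j' ∈ Finset.range N, ∑ a' ∈ Finset.range A, ∑ b' ∈ Finset.range B, ∑ s : Fin 8,
            ∑ a ∈ Finset.range (A+1), ∑ b ∈ Finset.range (B+1),
            (if cellNode j' a' b' s = ((j+1 : ℕ), a, b) then Fq L φ j' a' b' s else 0) :=
          swap6 _ _ _ _ _ _
      _ = ∑ j' ∈ Finset.range N, G j' := by
          refine Finset.sum_congr rfl fun j' _ => Finset.sum_congr rfl fun a' ha' =>
            Finset.sum_congr rfl fun b' hb' => Finset.sum_congr rfl fun s _ => ?_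
          have ha'' := Finset.mem_range.mp ha'
          have hb'' := Finset.mem_range.mp hb'
          have hm2 : (s.val / 2) % 2 < 2 := Nat.mod_lt _ (by norm_num)
          have hm4 : s.val / 4 ≤ 1 := by omega
          exact collapse A B (j' + s.val % 2) (a' + (s.val / 2) % 2) (b' + s.val / 4)
            (j+1) (by omega) (by omega) (Fq L φ j' a' b' s)
  -- only time levels j and j+1 contribute
  have hsplit : ∑ j' ∈ Finset.range N, G j' = G j + G (j+1) := by
    rw [← Finset.sum_pair (show j ≠ j+1 by omega)]
    refine (Finset.sum_subset ?_ ?_).symm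
    · intro x hx
      simp only [Finset.mem_insert, Finset.mem_singleton] at hx
      rw [Finset.mem_range]
      omega
    · intro x _ hnx
      simp only [Finset.mem_insert, Finset.mem_singleton, not_or] at hnx
      refine Finset.sum_eq_zero fun a' _ => Finset.sum_eq_zero fun b' _ =>
        Finset.sum_eq_zero fun s _ => ?_
      have hs : s.val % 2 < 2 := Nat.mod_lt _ (by norm_num)
      rw [if_neg (by omega)]
  have hGj : G j = Jang A B L φ j := by
    rw [hG]
    calc (∑ a' ∈ Finset.range A, ∑ b' ∈ Finset.range B, ∑ s : Fin 8,
        (if j + s.val % 2 = j + 1 then Fq L φ j a' b' s else 0))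
        = ∑ a' ∈ Finset.range A, ∑ b' ∈ Finset.range B, ∑ s : Fin 8,
            (if s.val % 2 = 1 then Fq L φ j a' b' s else 0) :=
          Finset.sum_congr rfl fun a' _ => Finset.sum_congr rfl fun b' _ =>
            Finset.sum_congr rfl fun s _ => if_congr (by omega) rfl rfl
      _ = ∑ a' ∈ Finset.range A, ∑ b' ∈ Finset.range B,
            (Fq L φ j a' b' 1 + Fq L φ j a' b' 3 + Fq L φ j a' b' 5 + Fq L φ j a' b' 7) :=
          Finset.sum_congr rfl fun a' _ => Finset.sum_congr rfl fun b' _ => sum_odd _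
      _ = Jang A B L φ j := rfl
  have hGj1 : G (j+1) = - Jang A B L φ (j+1) := by
    rw [hG]
    calc (∑ a' ∈ Finset.range A, ∑ b' ∈ Finset.range B, ∑ s : Fin 8,
        (if (j+1) + s.val % 2 = j + 1 then Fq L φ (j+1) a' b' s else 0))
        = ∑ a' ∈ Finset.range A, ∑ b' ∈ Finset.range B, ∑ s : Fin 8,
            (if s.val % 2 = 0 then Fq L φ (j+1) a' b' s else 0) :=
          Finset.sum_congr rfl fun a' _ => Finset.sum_congr rfl fun b' _ =>
            Finset.sum_congr rfl fun s _ => if_congr (by omega) rfl rfl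
      _ = ∑ a' ∈ Finset.range A, ∑ b' ∈ Finset.range B,
            (Fq L φ (j+1) a' b' 0 + Fq L φ (j+1) a' b' 2
              + Fq L φ (j+1) a' b' 4 + Fq L φ (j+1) a' b' 6) :=
          Finset.sum_congr rfl fun a' _ => Finset.sum_congr rfl fun b' _ => sum_even _
      _ = ∑ a' ∈ Finset.range A, ∑ b' ∈ Finset.range B,
            -(Fq L φ (j+1) a' b' 1 + Fq L φ (j+1) a' b' 3
              + Fq L φ (j+1) a' b' 5 + Fq L φ (j+1) a' b' 7) := by
          refine Finset.sum_congr rfl fun a' _ => Finset.sum_congr rfl fun b' _ => ?_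
          have := hcell (j+1) a' b'
          rw [Fin.sum_univ_eight] at this
          show (⟪pgrad L (jet φ (j+1) a' b') 0, Jrot (jet φ (j+1) a' b' 0)⟫ : ℝ) + _ + _ + _ = _
          simp only [Fq] at this ⊢
          linarith
      _ = - Jang A B L φ (j+1) := by simp only [Finset.sum_neg_distrib]; rfl
  have : Jang A B L φ j - Jang A B L φ (j+1) = 0 := by
    rw [hexp, hsplit, hGj, hGj1] at hS0
    linarith
  linarith

end
end
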